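/- The canonical projector P_V onto a complete subsemimodule V of (R̄_max)^X is non-expansive in the sup-norm: for all functions u, v with ‖u − v‖_∞ < ∞, ‖P_V(u) − P_V(v)‖_∞ ≤ ‖u − v‖_∞. -/

import Mathlib

/-- One-sided version: if `u ≤ v + c` pointwise, then `P_V u ≤ P_V v + c`. -/
lemma proj_nonexpansive_aux {X : Type*} (V : Set (X → EReal))
    (hVconst : ∀ f ∈ V, ∀ c : ℝ, (fun x => f x + (c : EReal)) ∈ V)
    (u v : X → EReal) (c : ℝ)
    (huv : ∀ x, u x ≤ v x + (c : EReal)) :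
    ∀ x, (⨆ f ∈ {f | f ∈ V ∧ ∀ y, f y ≤ u y}, f x)
        ≤ (⨆ f ∈ {f | f ∈ V ∧ ∀ y, f y ≤ v y}, f x) + (c : EReal) := by
  intro x
  refine iSup₂_le fun f hf => ?_
  obtain ⟨hfV, hfu⟩ := hf
  have hg : (fun x => f x + ((-c : ℝ) : EReal)) ∈ V := hVconst f hfV (-c)
  have hgv : ∀ y, f y + ((-c : ℝ) : EReal) ≤ v y := by
    intro y
    have h1 : f y + ((-c : ℝ) : EReal) ≤ (v y + (c : EReal)) + ((-c : ℝ) : EReal) :=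
      add_le_add_left ((hfu y).trans (huv y)) _
    have h2 : (v y + (c : EReal)) + ((-c : ℝ) : EReal) = v y := by
      rw [add_assoc, ← EReal.coe_add, add_neg_cancel, EReal.coe_zero, add_zero]
    rwa [h2] at h1
  have hle : f x + ((-c : ℝ) : EReal) ≤ ⨆ g ∈ {g | g ∈ V ∧ ∀ y, g y ≤ v y}, g x :=
    le_iSup₂_of_le (fun x => f x + ((-c : ℝ) : EReal)) ⟨hg, hgv⟩ le_rfl
  have h3 := add_le_add_left hle (c : EReal)
  have hcanc : f x + ((-c : ℝ) : EReal) + (c : EReal) = f x := by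
    rw [add_assoc, ← EReal.coe_add, neg_add_cancel, EReal.coe_zero, add_zero]
  rwa [hcanc] at h3

/-- The canonical projector `P_V` onto a complete subsemimodule `V` of
`(R̄_max)^X` (a set of functions `X → EReal` closed under arbitrary
pointwise sups and under addition of real constants) is non-expansive in
the sup-norm: if `‖u − v‖_∞ ≤ c < ∞` (i.e. `u ≤ v + c` and `v ≤ u + c`
pointwise), then `‖P_V u − P_V v‖_∞ ≤ c` in the same sense.  Here
`P_V u = max {f ∈ V | f ≤ u} = ⨆ f ∈ {f ∈ V | f ≤ u}, f`. -/
theorem proj_nonexpansive {X : Type*} (V : Set (X → EReal))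
    (hVsup : ∀ S : Set (X → EReal), S ⊆ V →
      (fun x => ⨆ f ∈ S, f x) ∈ V)
    (hVconst : ∀ f ∈ V, ∀ c : ℝ, (fun x => f x + (c : EReal)) ∈ V)
    (u v : X → EReal) (c : ℝ) (hc : 0 ≤ c)
    (huv : ∀ x, u x ≤ v x + (c : EReal) ∧ v x ≤ u x + (c : EReal)) :
    (∀ x, (⨆ f ∈ {f | f ∈ V ∧ ∀ y, f y ≤ u y}, f x)
        ≤ (⨆ f ∈ {f | f ∈ V ∧ ∀ y, f y ≤ v y}, f x) + (c : EReal)) ∧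
    (∀ x, (⨆ f ∈ {f | f ∈ V ∧ ∀ y, f y ≤ v y}, f x)
        ≤ (⨆ f ∈ {f | f ∈ V ∧ ∀ y, f y ≤ u y}, f x) + (c : EReal)) := by
  exact ⟨proj_nonexpansive_aux V hVconst u v c (fun x => (huv x).1),
         proj_nonexpansive_aux V hVconst v u c (fun x => (huv x).2)⟩
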